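/- arXiv:1203.5448 — 2 statements merged into one kernel-verified Lean document; each statement's English description precedes it below -/
import Mathlib

section
/- Suppose K ⊆ ℝ^d is a continuum contained in a (closed) unit cube Q such that K has a point on each of two opposite faces of Q. Then for every positive integer N there exist N pairwise non-overlapping cubes Q₁, …, Q_N of edge length 1/N such that for each i ∈ {1, …, N} there is a continuum K_i ⊆ K ∩ Q_i having a point on each of two opposite faces of Q_i. -/
open Set


/-- The axis-parallel closed cube in `ℝ^d` with "lower" corner `c` and edge length `ℓ`. -/
def cube {d : ℕ} (c : EuclideanSpace ℝ (Fin d)) (ℓ : ℝ) : Set (EuclideanSpace ℝ (Fin d)) :=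
  {x | ∀ i, x i ∈ Set.Icc (c i) (c i + ℓ)}

/-- `K` has a point on each of two opposite faces of the cube with corner `c` and edge
length `ℓ`: for some coordinate direction `j`, `K` contains a point with `j`-th coordinate
`c j` and a point with `j`-th coordinate `c j + ℓ`. -/
def SpansCube {d : ℕ} (c : EuclideanSpace ℝ (Fin d)) (ℓ : ℝ)
    (K : Set (EuclideanSpace ℝ (Fin d))) : Prop :=
  ∃ j : Fin d, (∃ x ∈ K, x j = c j) ∧ (∃ y ∈ K, y j = c j + ℓ)


lemma cut_wire {X : Type*} [TopologicalSpace X] [T2Space X] {C : Set X}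
    (hC : IsCompact C) (hconn : IsConnected C) {f : X → ℝ} (hf : Continuous f)
    {a b : ℝ} (hab : a ≤ b) (hx : ∃ x ∈ C, f x ≤ a) (hy : ∃ y ∈ C, b ≤ f y) :
    ∃ E, E ⊆ C ∧ IsCompact E ∧ IsConnected E ∧ (∀ z ∈ E, f z ∈ Set.Icc a b) ∧
      (∃ p ∈ E, f p = a) ∧ (∃ q ∈ E, f q = b) := by
  obtain ⟨x₀, hx₀C, hx₀⟩ := hx
  obtain ⟨y₀, hy₀C, hy₀⟩ := hy
  -- the image is ord-connected, so `a` and `b` are attained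
  have himg : OrdConnected (f '' C) :=
    ((hconn.isPreconnected).image f hf.continuousOn).ordConnected
  have haim : a ∈ f '' C :=
    himg.out ⟨x₀, hx₀C, rfl⟩ ⟨y₀, hy₀C, rfl⟩ ⟨hx₀, hab.trans hy₀⟩
  have hbim : b ∈ f '' C :=
    himg.out ⟨x₀, hx₀C, rfl⟩ ⟨y₀, hy₀C, rfl⟩ ⟨hx₀.trans hab, hy₀⟩
  obtain ⟨p₀, hp₀C, hp₀⟩ := haim
  rcases eq_or_lt_of_le hab with rfl | hlt
  · exact ⟨{p₀}, by simpa using hp₀C, isCompact_singleton, isConnected_singleton,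
      by simp [hp₀], ⟨p₀, rfl, hp₀⟩, ⟨p₀, rfl, hp₀⟩⟩
  -- the strip
  set S : Set X := C ∩ f ⁻¹' Icc a b with hSdef
  have hScomp : IsCompact S := hC.inter_right (isClosed_Icc.preimage hf)
  haveI : CompactSpace S := isCompact_iff_compactSpace.mp hScomp
  have hfS : Continuous fun z : S => f (z : X) := hf.comp continuous_subtype_val
  have hp₀S : p₀ ∈ S := ⟨hp₀C, by simp [hp₀, hab]⟩
  -- main claim
  have main : ∃ z₀ : S, f (z₀ : X) = a ∧ ∃ w ∈ connectedComponent z₀, f (w : X) = b := by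
    by_contra hcon
    push_neg at hcon
    have key : ∀ z : S, f (z : X) = a →
        ∃ Z : Set S, IsClopen Z ∧ z ∈ Z ∧ ∀ w ∈ Z, f (w : X) ≠ b := by
      intro z hz
      have hBc : IsCompact {w : S | f (w : X) = b} :=
        (isClosed_eq hfS continuous_const).isCompact
      have hempty : ({w : S | f (w : X) = b} ∩
          ⋂ Z : { Z : Set S // IsClopen Z ∧ z ∈ Z }, (Z : Set S)) = ∅ := by
        rw [← connectedComponent_eq_iInter_isClopen]
        ext w
        simp only [mem_inter_iff, mem_setOf_eq, mem_empty_iff_false, iff_false, not_and]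
        exact fun hw hwc => hcon z hz w hwc hw
      haveI : Nonempty { Z : Set S // IsClopen Z ∧ z ∈ Z } :=
        ⟨⟨univ, isClopen_univ, mem_univ z⟩⟩
      obtain ⟨Z, hZ⟩ := hBc.elim_directed_family_closed _ (fun Z => Z.2.1.1) hempty
        (fun Z₁ Z₂ => ⟨⟨Z₁ ∩ Z₂, Z₁.2.1.inter Z₂.2.1, Z₁.2.2, Z₂.2.2⟩,
          inter_subset_left, inter_subset_right⟩)
      refine ⟨Z, Z.2.1, Z.2.2, fun w hw hwb => ?_⟩
      have : w ∈ ({w : S | f (w : X) = b} ∩ (Z : Set S)) := ⟨hwb, hw⟩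
      rw [hZ] at this
      exact this
    -- cover the `a`-level set by finitely many such clopens
    have hAc : IsCompact {z : S | f (z : X) = a} :=
      (isClosed_eq hfS continuous_const).isCompact
    choose Z hZclopen hZmem hZb using key
    obtain ⟨t, ht⟩ := hAc.elim_finite_subcover
      (fun z : { z : S // f (z : X) = a } => Z z z.2)
      (fun z => (hZclopen z z.2).2)
      (fun z hz => mem_iUnion.mpr ⟨⟨z, hz⟩, hZmem z hz⟩)
    set U : Set S := ⋃ z ∈ t, Z z z.2 with hUdef
    have hUclopen : IsClopen U := isClopen_biUnion_finset fun z _ => hZclopen z z.2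
    have hUA : ∀ z : S, f (z : X) = a → z ∈ U := by
      intro z hz
      rcases mem_iUnion₂.mp (ht hz) with ⟨w, hw, hzw⟩
      exact mem_iUnion₂.mpr ⟨w, hw, hzw⟩
    have hUb : ∀ w ∈ U, f (w : X) ≠ b := by
      intro w hw
      rcases mem_iUnion₂.mp hw with ⟨z, _, hzw⟩
      exact hZb z z.2 w hzw
    -- now derive a contradiction with connectedness of C
    have hUcompact : IsCompact ((↑) '' U : Set X) :=
      (hUclopen.1.isCompact).image continuous_subtype_val
    have hUccompact : IsCompact ((↑) '' Uᶜ : Set X) :=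
      ((hUclopen.compl).1.isCompact).image continuous_subtype_val
    set F₁ : Set X := ((↑) '' U) ∪ (C ∩ f ⁻¹' Iic a) with hF₁
    set F₂ : Set X := ((↑) '' Uᶜ) ∪ (C ∩ f ⁻¹' Ici b) with hF₂
    have hF₁closed : IsClosed F₁ :=
      hUcompact.isClosed.union (hC.isClosed.inter (isClosed_Iic.preimage hf))
    have hF₂closed : IsClosed F₂ :=
      hUccompact.isClosed.union (hC.isClosed.inter (isClosed_Ici.preimage hf))
    have hcover : C ⊆ F₁ ∪ F₂ := by
      intro w hw
      rcases le_or_gt (f w) a with h1 | h1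
      · exact Or.inl (Or.inr ⟨hw, h1⟩)
      rcases le_or_gt b (f w) with h2 | h2
      · exact Or.inr (Or.inr ⟨hw, h2⟩)
      have hwS : w ∈ S := ⟨hw, h1.le, h2.le⟩
      by_cases hU : (⟨w, hwS⟩ : S) ∈ U
      · exact Or.inl (Or.inl ⟨⟨w, hwS⟩, hU, rfl⟩)
      · exact Or.inr (Or.inl ⟨⟨w, hwS⟩, hU, rfl⟩)
    have hdisj : Disjoint F₁ F₂ := by
      rw [Set.disjoint_left]
      rintro w (⟨z, hzU, rfl⟩ | ⟨hwC, hwa⟩) hw₂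
      · rcases hw₂ with ⟨z', hz', hz'e⟩ | ⟨_, hwb⟩
        · have : z' = z := Subtype.ext hz'e
          exact hz' (this ▸ hzU)
        · have : f (z : X) = b := le_antisymm z.2.2.2 hwb
          exact hUb z hzU this
      · rcases hw₂ with ⟨z', hz', rfl⟩ | ⟨_, hwb⟩
        · have : f (z' : X) = a := le_antisymm hwa z'.2.2.1
          exact hz' (hUA z' this)
        · exact absurd (le_trans hwb hwa) (not_le.mpr hlt)
    rcases (isPreconnected_iff_subset_of_fully_disjoint_closed hC.isClosed).mp
      hconn.isPreconnected F₁ F₂ hF₁closed hF₂closed hcover hdisj with hsub | hsub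
    · -- y with f y = b lies in F₁ : contradiction
      obtain ⟨q₀, hq₀C, hq₀⟩ := hbim
      rcases hsub hq₀C with ⟨z, hzU, rfl⟩ | ⟨_, hqa⟩
      · exact hUb z hzU hq₀
      · exact absurd (hq₀ ▸ hqa) (not_le.mpr hlt)
    · rcases hsub hp₀C with ⟨z, hz, hze⟩ | ⟨_, hpb⟩
      · have : ((⟨p₀, hp₀S⟩ : S) : X) = (z : X) := hze.symm
        have hez : (⟨p₀, hp₀S⟩ : S) = z := Subtype.ext this
        exact hz (hez ▸ hUA ⟨p₀, hp₀S⟩ hp₀)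
      · exact absurd (hp₀ ▸ hpb) (not_le.mpr hlt)
  obtain ⟨z₀, hz₀a, w, hwc, hwb⟩ := main
  refine ⟨(↑) '' connectedComponent z₀, ?_, ?_, ?_, ?_, ?_, ?_⟩
  · rintro _ ⟨z, _, rfl⟩; exact z.2.1
  · exact (isClosed_connectedComponent.isCompact).image continuous_subtype_val
  · exact (isConnected_connectedComponent).image _ continuous_subtype_val.continuousOn
  · rintro _ ⟨z, _, rfl⟩; exact z.2.2
  · exact ⟨z₀, ⟨z₀, mem_connectedComponent, rfl⟩, hz₀a⟩
  · exact ⟨w, ⟨w, hwc, rfl⟩, hwb⟩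

lemma trim_base {d : ℕ} {ℓ : ℝ} (hℓ : 0 < ℓ) (j0 : Fin d) (A : ℝ)
    (E : Set (EuclideanSpace ℝ (Fin d))) (j : Fin d) (t : ℝ)
    (hcomp : IsCompact E) (hconn : IsConnected E)
    (hslab : ∀ x ∈ E, x j0 ∈ Icc A (A + ℓ))
    (hj : ∀ x ∈ E, x j ∈ Icc t (t + ℓ))
    (hp : ∃ p ∈ E, p j = t) (hq : ∃ q ∈ E, q j = t + ℓ)
    (hnb : ∀ i : Fin d, ∀ x ∈ E, ∀ y ∈ E, y i ≤ x i + ℓ) :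
    ∃ q : EuclideanSpace ℝ (Fin d), q j0 = A ∧ E ⊆ cube q ℓ ∧ SpansCube q ℓ E := by
  obtain ⟨p, hpE, hpj⟩ := hp
  obtain ⟨r, hrE, hrj⟩ := hq
  have hne : E.Nonempty := ⟨p, hpE⟩
  set q : EuclideanSpace ℝ (Fin d) :=
    WithLp.toLp 2 (fun i => if i = j0 then A else sInf ((fun x => x i) '' E)) with hqdef
  have hqapp : ∀ i, q i = if i = j0 then A else sInf ((fun x => x i) '' E) := fun i => rfl
  have himg : ∀ i : Fin d, IsCompact ((fun x => x i) '' E) :=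
    fun i => hcomp.image (PiLp.continuous_apply (p := 2) (β := fun _ : Fin d => ℝ) i)
  have hbdd : ∀ i : Fin d, BddBelow ((fun x => x i) '' E) := fun i => (himg i).bddBelow
  have hmem : ∀ i : Fin d, sInf ((fun x => x i) '' E) ∈ (fun x => x i) '' E :=
    fun i => (himg i).sInf_mem (hne.image _)
  have hle : ∀ (i : Fin d), ∀ x ∈ E, sInf ((fun x => x i) '' E) ≤ x i :=
    fun i x hx => csInf_le (hbdd i) ⟨x, hx, rfl⟩
  have hcube : E ⊆ cube q ℓ := by
    intro x hx i
    rw [hqapp i]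
    split_ifs with h
    · subst h; exact hslab x hx
    · obtain ⟨y, hyE, hy⟩ := hmem i
      exact ⟨hle i x hx, by rw [← hy]; exact hnb i y hyE x hx⟩
  have hqj : q j = t := by
    rw [hqapp]
    split_ifs with h
    · -- j = j0 : then t = A
      subst h
      have h1 : A ≤ t := by rw [← hpj]; exact (hslab p hpE).1
      have h2 : t + ℓ ≤ A + ℓ := by rw [← hrj]; exact (hslab r hrE).2
      linarith
    · exact le_antisymm (csInf_le (hbdd j) ⟨p, hpE, hpj⟩)
        (le_csInf (hne.image _) (by rintro _ ⟨x, hx, rfl⟩; exact (hj x hx).1))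
  exact ⟨q, if_pos rfl, hcube, j, ⟨p, hpE, by rw [hqj, hpj]⟩, ⟨r, hrE, by rw [hqj, hrj]⟩⟩

lemma trim {d : ℕ} {ℓ : ℝ} (hℓ : 0 < ℓ) (j0 : Fin d) :
    ∀ n : ℕ, ∀ A : ℝ, ∀ E : Set (EuclideanSpace ℝ (Fin d)), ∀ j : Fin d, ∀ t : ℝ,
    IsCompact E → IsConnected E →
    (∀ x ∈ E, x j0 ∈ Icc A (A + ℓ)) →
    (∀ x ∈ E, x j ∈ Icc t (t + ℓ)) →
    (∃ p ∈ E, p j = t) → (∃ q ∈ E, q j = t + ℓ) →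
    {i : Fin d | ∃ x ∈ E, ∃ y ∈ E, x i + ℓ < y i}.ncard ≤ n →
    ∃ q : EuclideanSpace ℝ (Fin d), q j0 = A ∧
      ∃ E' ⊆ E, IsCompact E' ∧ IsConnected E' ∧ E' ⊆ cube q ℓ ∧ SpansCube q ℓ E' := by
  intro n
  induction n with
  | zero =>
    intro A E j t hcomp hconn hslab hj hp hq hcard
    have hnb : ∀ i : Fin d, ∀ x ∈ E, ∀ y ∈ E, y i ≤ x i + ℓ := by
      intro i x hx y hy
      by_contra hlt
      have : i ∈ {i : Fin d | ∃ x ∈ E, ∃ y ∈ E, x i + ℓ < y i} :=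
        ⟨x, hx, y, hy, not_le.mp hlt⟩
      have hempty := Set.ncard_eq_zero (Set.toFinite _) |>.mp (Nat.le_zero.mp hcard)
      rw [Set.eq_empty_iff_forall_notMem] at hempty
      exact hempty i this
    obtain ⟨q, hq0, hcube, hspan⟩ :=
      trim_base hℓ j0 A E j t hcomp hconn hslab hj hp hq hnb
    exact ⟨q, hq0, E, Subset.rfl, hcomp, hconn, hcube, hspan⟩
  | succ n ih =>
    intro A E j t hcomp hconn hslab hj hp hq hcard
    by_cases hnb : ∀ i : Fin d, ∀ x ∈ E, ∀ y ∈ E, y i ≤ x i + ℓ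
    · obtain ⟨q, hq0, hcube, hspan⟩ :=
        trim_base hℓ j0 A E j t hcomp hconn hslab hj hp hq hnb
      exact ⟨q, hq0, E, Subset.rfl, hcomp, hconn, hcube, hspan⟩
    push_neg at hnb
    obtain ⟨i, x, hx, y, hy, hbad⟩ := hnb
    have hibad : i ∈ {i : Fin d | ∃ x ∈ E, ∃ y ∈ E, x i + ℓ < y i} := ⟨x, hx, y, hy, hbad⟩
    have hne : E.Nonempty := ⟨x, hx⟩
    have himg : IsCompact ((fun x => x i) '' E) := hcomp.image (PiLp.continuous_apply (p := 2) (β := fun _ : Fin d => ℝ) i)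
    set t' : ℝ := sInf ((fun x => x i) '' E) with ht'def
    obtain ⟨p', hp'E, hp'⟩ := himg.sInf_mem (hne.image _)
    have hle : ∀ z ∈ E, t' ≤ z i := fun z hz => csInf_le himg.bddBelow ⟨z, hz, rfl⟩
    obtain ⟨E', hE'sub, hE'comp, hE'conn, hE'rng, hE'p, hE'q⟩ :=
      cut_wire hcomp hconn (PiLp.continuous_apply (p := 2) (β := fun _ : Fin d => ℝ) i) (by linarith : t' ≤ t' + ℓ)
        ⟨p', hp'E, le_of_eq hp'⟩ ⟨y, hy, by have := hle x hx; linarith⟩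
    have hcard' : {m : Fin d | ∃ x ∈ E', ∃ y ∈ E', x m + ℓ < y m}.ncard ≤ n := by
      have hsub : {m : Fin d | ∃ x ∈ E', ∃ y ∈ E', x m + ℓ < y m} ⊆
          {m : Fin d | ∃ x ∈ E, ∃ y ∈ E, x m + ℓ < y m} \ {i} := by
        rintro m ⟨x', hx', y', hy', hm⟩
        refine ⟨⟨x', hE'sub hx', y', hE'sub hy', hm⟩, ?_⟩
        simp only [mem_singleton_iff]
        rintro rfl
        have h1 := (hE'rng x' hx').1
        have h2 := (hE'rng y' hy').2
        linarith
      have hle1 : {m : Fin d | ∃ x ∈ E', ∃ y ∈ E', x m + ℓ < y m}.ncard ≤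
          ({m : Fin d | ∃ x ∈ E, ∃ y ∈ E, x m + ℓ < y m} \ {i}).ncard :=
        Set.ncard_le_ncard hsub (Set.toFinite _)
      have hle2 : ({m : Fin d | ∃ x ∈ E, ∃ y ∈ E, x m + ℓ < y m} \ {i}).ncard =
          {m : Fin d | ∃ x ∈ E, ∃ y ∈ E, x m + ℓ < y m}.ncard - 1 :=
        Set.ncard_diff_singleton_of_mem hibad
      exact hle1.trans (hle2 ▸ Nat.sub_le_of_le_add hcard)
    obtain ⟨q, hq0, E'', hE''sub, h1, h2, h3, h4⟩ :=
      ih A E' i t' hE'comp hE'conn (fun z hz => hslab z (hE'sub hz)) hE'rng hE'p hE'q hcard'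
    exact ⟨q, hq0, E'', hE''sub.trans hE'sub, h1, h2, h3, h4⟩

lemma interior_cube_subset {d : ℕ} (q : EuclideanSpace ℝ (Fin d)) {ℓ : ℝ} (j : Fin d) :
    interior (cube q ℓ) ⊆ {x | q j < x j ∧ x j < q j + ℓ} := by
  intro x hx
  rcases Metric.mem_nhds_iff.mp (mem_interior_iff_mem_nhds.mp hx) with ⟨ε, hε, hb⟩
  have hnorm : ∀ c : ℝ, 0 ≤ c → ‖c • EuclideanSpace.single j (1:ℝ)‖ = c := by
    intro c hc
    rw [norm_smul, EuclideanSpace.norm_single, norm_one, mul_one, Real.norm_eq_abs,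
      abs_of_nonneg hc]
  have hmem : ∀ c : ℝ, 0 ≤ c → c < ε → x + c • EuclideanSpace.single j (1:ℝ) ∈ cube q ℓ ∧
      x - c • EuclideanSpace.single j (1:ℝ) ∈ cube q ℓ := by
    intro c hc hcε
    constructor
    · apply hb
      rw [Metric.mem_ball, dist_eq_norm, add_sub_cancel_left, hnorm c hc]
      exact hcε
    · apply hb
      rw [Metric.mem_ball, dist_eq_norm, sub_sub_cancel_left, norm_neg, hnorm c hc]
      exact hcε
  obtain ⟨h₁, h₂⟩ := hmem (ε/2) (by linarith) (by linarith)
  have e₁ : (x + (ε/2) • EuclideanSpace.single j (1:ℝ)) j = x j + ε/2 := by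
    simp [EuclideanSpace.single_apply]
  have e₂ : (x - (ε/2) • EuclideanSpace.single j (1:ℝ)) j = x j - ε/2 := by
    simp [EuclideanSpace.single_apply]
  have h₁' := (h₁ j).2
  have h₂' := (h₂ j).1
  rw [e₁] at h₁'
  rw [e₂] at h₂'
  exact ⟨by linarith, by linarith⟩

/-- Suppose `K ⊆ ℝ^d` is a continuum contained in a closed unit cube `Q`, having a point
on each of two opposite faces of `Q`. Then for any positive integer `N` there are `N`
pairwise non-overlapping cubes of edge length `1/N`, each containing a subcontinuum of `K`
having a point on each of two opposite faces of that cube. -/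
theorem continuum_subdivision_into_spanning_subcubes
    {d : ℕ} (c : EuclideanSpace ℝ (Fin d)) (K : Set (EuclideanSpace ℝ (Fin d)))
    (hKcomp : IsCompact K) (hKconn : IsConnected K)
    (hKQ : K ⊆ cube c 1) (hspan : SpansCube c 1 K)
    (N : ℕ) (hN : 0 < N) :
    ∃ q : Fin N → EuclideanSpace ℝ (Fin d),
      (∀ i j, i ≠ j →
        Disjoint (interior (cube (q i) (1 / N))) (interior (cube (q j) (1 / N)))) ∧
      ∀ i, ∃ Ki : Set (EuclideanSpace ℝ (Fin d)),
        Ki ⊆ K ∩ cube (q i) (1 / N) ∧ IsCompact Ki ∧ IsConnected Ki ∧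
        SpansCube (q i) (1 / N) Ki := by
  obtain ⟨j, ⟨x₀, hx₀K, hx₀⟩, ⟨y₀, hy₀K, hy₀⟩⟩ := hspan
  have hNR : (0:ℝ) < (N:ℝ) := by exact_mod_cast hN
  set ℓ : ℝ := 1 / (N:ℝ) with hℓdef
  have hℓ : 0 < ℓ := by positivity
  have hNℓ : (N:ℝ) * ℓ = 1 := by
    rw [hℓdef]; field_simp
  have hstep : ∀ k : Fin N, ∃ q : EuclideanSpace ℝ (Fin d),
      q j = c j + (k:ℕ) * ℓ ∧ ∃ Ki : Set (EuclideanSpace ℝ (Fin d)),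
        Ki ⊆ K ∩ cube q ℓ ∧ IsCompact Ki ∧ IsConnected Ki ∧ SpansCube q ℓ Ki := by
    intro k
    set a : ℝ := c j + (k:ℕ) * ℓ with hadef
    have hk0 : (0:ℝ) ≤ (k:ℕ) := Nat.cast_nonneg _
    have hkN : ((k:ℕ):ℝ) + 1 ≤ (N:ℝ) := by
      have : (k:ℕ) + 1 ≤ N := k.isLt
      exact_mod_cast this
    have hxa : x₀ j ≤ a := by
      rw [hx₀, hadef]
      nlinarith
    have hyb : a + ℓ ≤ y₀ j := by
      rw [hy₀, hadef]
      have : ((k:ℕ):ℝ) * ℓ + ℓ ≤ (N:ℝ) * ℓ := by nlinarith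
      linarith [hNℓ ▸ this]
    obtain ⟨E, hEK, hEcomp, hEconn, hErng, hEp, hEq⟩ :=
      cut_wire hKcomp hKconn (PiLp.continuous_apply (p := 2) (β := fun _ : Fin d => ℝ) j) (by linarith : a ≤ a + ℓ)
        ⟨x₀, hx₀K, hxa⟩ ⟨y₀, hy₀K, hyb⟩
    obtain ⟨q, hq0, E', hE'sub, hE'comp, hE'conn, hE'cube, hE'span⟩ :=
      trim hℓ j d a E j a hEcomp hEconn hErng hErng hEp hEq
        ((Set.ncard_le_ncard (Set.subset_univ _) (Set.toFinite _)).trans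
          (by simp [Set.ncard_univ]))
    exact ⟨q, hq0, E', fun z hz => ⟨hEK (hE'sub hz), hE'cube hz⟩,
      hE'comp, hE'conn, hE'span⟩
  choose q hq0 hKi using hstep
  refine ⟨q, ?_, hKi⟩
  intro k m hkm
  rw [Set.disjoint_left]
  intro z hz₁ hz₂
  have h₁ := interior_cube_subset (q k) j hz₁
  have h₂ := interior_cube_subset (q m) j hz₂
  rw [hq0 k] at h₁
  rw [hq0 m] at h₂
  have hne : (k:ℕ) ≠ (m:ℕ) := fun h => hkm (Fin.ext h)
  rcases lt_or_gt_of_ne hne with h | h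
  · have : ((k:ℕ):ℝ) + 1 ≤ ((m:ℕ):ℝ) := by exact_mod_cast h
    nlinarith [h₁.1, h₁.2, h₂.1, h₂.2]
  · have : ((m:ℕ):ℝ) + 1 ≤ ((k:ℕ):ℝ) := by exact_mod_cast h
    nlinarith [h₁.1, h₁.2, h₂.1, h₂.2]
end

section
/- Let x ∈ ℝ^d and for each n ≥ 1 let A_n ⊆ ℝ^d be a set contained in the closed ball of radius 2^{-n} centered at x, such that each A_n is covered by a rectifiable curve of length at most 2^{-n}. Then there exists a single rectifiable curve covering ⋃_{n≥1} A_n. -/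
set_option maxHeartbeats 1000000

open Set

/-- Gluing two Lipschitz pieces on adjacent intervals. -/
lemma lipGlue {E : Type*} [PseudoEMetricSpace E] {K : NNReal} {f : ℝ → E} {a b c : ℝ}
    (hab : a ≤ b) (hbc : b ≤ c)
    (h1 : LipschitzOnWith K f (Icc a b)) (h2 : LipschitzOnWith K f (Icc b c)) :
    LipschitzOnWith K f (Icc a c) := by
  have key : ∀ u ∈ Icc a c, ∀ v ∈ Icc a c, u ≤ v → edist (f u) (f v) ≤ K * edist u v := by
    intro u hu v hv huv
    by_cases hvb : v ≤ b
    · exact h1 ⟨hu.1, (huv.trans hvb)⟩ ⟨hv.1, hvb⟩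
    by_cases hbu : b ≤ u
    · exact h2 ⟨hbu, hu.2⟩ ⟨(not_le.1 hvb).le, hv.2⟩
    have hub : u ≤ b := (not_le.1 hbu).le
    have hbv : b ≤ v := (not_le.1 hvb).le
    calc edist (f u) (f v) ≤ edist (f u) (f b) + edist (f b) (f v) := edist_triangle _ _ _
      _ ≤ K * edist u b + K * edist b v :=
          add_le_add (h1 ⟨hu.1, hub⟩ ⟨hab, le_rfl⟩) (h2 ⟨le_rfl, hbc⟩ ⟨hbv, hv.2⟩)
      _ = K * (edist u b + edist b v) := (mul_add _ _ _).symm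
      _ = K * edist u v := by
          rw [edist_dist, edist_dist, edist_dist, Real.dist_eq, Real.dist_eq, Real.dist_eq,
            abs_of_nonpos (by linarith), abs_of_nonpos (by linarith),
            abs_of_nonpos (by linarith), ← ENNReal.ofReal_add (by linarith) (by linarith)]
          ring_nf
  intro u hu v hv
  rcases le_total u v with h | h
  · exact key u hu v hv h
  · rw [edist_comm (f u), edist_comm u]; exact key v hv u hu h

lemma lipCongr {E : Type*} [PseudoEMetricSpace E] {K : NNReal} {f g : ℝ → E} {s : Set ℝ}
    (h : LipschitzOnWith K f s) (he : EqOn g f s) : LipschitzOnWith K g s := by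
  intro u hu v hv
  rw [he hu, he hv]; exact h hu hv

lemma euclid_coord_dist {d : ℕ} (u v : EuclideanSpace ℝ (Fin d)) (i : Fin d) :
    dist (u i) (v i) ≤ dist u v := by
  rw [EuclideanSpace.dist_eq]
  have h1 : dist (u i) (v i) = Real.sqrt (dist (u i) (v i) ^ 2) :=
    (Real.sqrt_sq dist_nonneg).symm
  rw [h1]
  exact Real.sqrt_le_sqrt (Finset.single_le_sum (f := fun j => dist (u j) (v j) ^ 2)
    (fun j _ => sq_nonneg _) (Finset.mem_univ i))

/-- Each small set can be covered by a Lipschitz loop based at `x`. -/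
lemma pieceLemma {d : ℕ} (x : EuclideanSpace ℝ (Fin d)) (A : Set (EuclideanSpace ℝ (Fin d)))
    (n : ℕ) (hball : A ⊆ Metric.closedBall x ((1 / 2 : ℝ) ^ n))
    (hc : ∃ (a b : ℝ) (f : ℝ → EuclideanSpace ℝ (Fin d)), a ≤ b ∧
        ContinuousOn f (Set.Icc a b) ∧
        eVariationOn f (Set.Icc a b) ≤ ENNReal.ofReal ((1 / 2 : ℝ) ^ n) ∧
        A ⊆ f '' Set.Icc a b) :
    ∃ g : ℝ → EuclideanSpace ℝ (Fin d),
      LipschitzOnWith ((3 * ((d : NNReal) + 4)) * (1 / 2 : NNReal) ^ n) g (Icc 0 1) ∧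
      g 0 = x ∧ g 1 = x ∧ A ⊆ g '' Icc 0 1 := by
  classical
  by_cases hA : A.Nonempty
  swap
  · refine ⟨fun _ => x, ?_, rfl, rfl, ?_⟩
    · intro u _ v _; simp
    · rw [not_nonempty_iff_eq_empty] at hA; simp [hA]
  obtain ⟨a, b, f, hab, _, hvar, hcov⟩ := hc
  obtain ⟨y₀, hy₀⟩ := hA
  set ℓ : ℝ := (1 / 2) ^ n with hℓdef
  have hℓ : 0 < ℓ := by positivity
  set s : Set ℝ := Icc a b with hs
  have has : a ∈ s := ⟨le_rfl, hab⟩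
  have hbd : BoundedVariationOn f s := ne_top_of_le_ne_top ENNReal.ofReal_ne_top hvar
  have hbv : LocallyBoundedVariationOn f s := hbd.locallyBoundedVariationOn
  set ψ : ℝ → ℝ := variationOnFromTo f s a with hψ
  set p : ℝ → EuclideanSpace ℝ (Fin d) := naturalParameterization f s a with hp
  have hus : HasUnitSpeedOn p (ψ '' s) := has_unit_speed_naturalParameterization f hbv has
  have htoReal : (eVariationOn f s).toReal ≤ ℓ := ENNReal.toReal_le_of_le_ofReal hℓ.le hvar
  have hSsub : ∀ c ∈ s, ψ c ∈ Icc 0 ℓ := by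
    intro c hc
    refine ⟨variationOnFromTo.nonneg_of_le f s hc.1, ?_⟩
    rw [hψ, variationOnFromTo.eq_of_le f s hc.1]
    exact le_trans (ENNReal.toReal_mono hbd (eVariationOn.mono f inter_subset_left)) htoReal
  have hplip : LipschitzOnWith 1 p (ψ '' s) := by
    have key : ∀ u ∈ ψ '' s, ∀ v ∈ ψ '' s, u ≤ v →
        edist (p u) (p v) ≤ (1 : NNReal) * edist u v := by
      intro u hu v hv huv
      have hvar2 := hus hu hv
      calc edist (p u) (p v) ≤ eVariationOn p (ψ '' s ∩ Icc u v) :=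
            eVariationOn.edist_le p ⟨hu, le_rfl, huv⟩ ⟨hv, huv, le_rfl⟩
        _ ≤ (1 : NNReal) * edist u v := by
            rw [hvar2, edist_dist, Real.dist_eq, ENNReal.coe_one, one_mul]
            refine ENNReal.ofReal_le_ofReal ?_
            rw [abs_sub_comm, NNReal.coe_one, one_mul]
            exact le_abs_self _
    intro u hu v hv
    rcases le_total u v with h | h
    · exact key u hu v hv h
    · rw [edist_comm (p u), edist_comm u]; exact key v hv u hu h
  have hpf : ∀ c ∈ s, p (ψ c) = f c := by
    intro c hc
    have h := edist_naturalParameterization_eq_zero hbv has hc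
    rwa [edist_eq_zero] at h
  have hpil : ∀ i : Fin d, LipschitzOnWith 1 (fun t => p t i) (ψ '' s) := by
    intro i
    apply LipschitzOnWith.of_dist_le_mul
    intro u hu v hv
    calc dist (p u i) (p v i) ≤ dist (p u) (p v) := euclid_coord_dist _ _ i
      _ ≤ (1 : NNReal) * dist u v := hplip.dist_le_mul u hu v hv
  choose q hq1 hq2 using fun i => (hpil i).extend_real
  set Q : ℝ → EuclideanSpace ℝ (Fin d) := fun t => WithLp.toLp 2 (fun i => q i t) with hQ
  have hQdist : ∀ u v : ℝ, dist (Q u) (Q v) ≤ Real.sqrt d * dist u v := by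
    intro u v
    rw [EuclideanSpace.dist_eq]
    have hterm : ∀ i : Fin d, dist (Q u i) (Q v i) ^ 2 ≤ dist u v ^ 2 := by
      intro i
      have h := (hq1 i).dist_le_mul u v
      rw [NNReal.coe_one, one_mul] at h
      have h' : dist (Q u i) (Q v i) ≤ dist u v := h
      exact pow_le_pow_left₀ dist_nonneg h' 2
    have hsum : ∑ i, dist (Q u i) (Q v i) ^ 2 ≤ (d : ℝ) * dist u v ^ 2 := by
      calc ∑ i, dist (Q u i) (Q v i) ^ 2 ≤ ∑ _i : Fin d, dist u v ^ 2 :=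
            Finset.sum_le_sum (fun i _ => hterm i)
        _ = (d : ℝ) * dist u v ^ 2 := by
            rw [Finset.sum_const, Finset.card_univ, Fintype.card_fin, nsmul_eq_mul]
    calc Real.sqrt (∑ i, dist (Q u i) (Q v i) ^ 2)
        ≤ Real.sqrt ((d : ℝ) * dist u v ^ 2) := Real.sqrt_le_sqrt hsum
      _ = Real.sqrt d * dist u v := by
          rw [Real.sqrt_mul (Nat.cast_nonneg d), Real.sqrt_sq dist_nonneg]
  have hsd : Real.sqrt d ≤ (d : ℝ) + 2 := by
    have h1 : Real.sqrt d ≤ Real.sqrt (((d : ℝ) + 2) ^ 2) := by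
      apply Real.sqrt_le_sqrt
      nlinarith [(Nat.cast_nonneg d : (0:ℝ) ≤ (d:ℝ))]
    rwa [Real.sqrt_sq (by positivity)] at h1
  have hQf : ∀ c ∈ s, Q (ψ c) = f c := by
    intro c hc
    ext i
    show q i (ψ c) = f c i
    have h1 : q i (ψ c) = p (ψ c) i := (hq2 i ⟨c, hc, rfl⟩).symm
    rw [h1, hpf c hc]
  have hψa : ψ a = 0 := variationOnFromTo.self f s a
  have hQ0 : Q 0 = f a := by rw [← hψa]; exact hQf a has
  obtain ⟨c₀, hc₀, hfc₀⟩ := hcov hy₀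
  have hfa : dist (f a) x ≤ 2 * ℓ := by
    have h1 : dist (f a) (f c₀) ≤ (eVariationOn f s).toReal := hbd.dist_le has hc₀
    have h2 : dist (f c₀) x ≤ ℓ := by
      rw [hfc₀]
      exact Metric.mem_closedBall.1 (hball hy₀)
    calc dist (f a) x ≤ dist (f a) (f c₀) + dist (f c₀) x := dist_triangle _ _ _
      _ ≤ ℓ + ℓ := add_le_add (h1.trans htoReal) h2
      _ = 2 * ℓ := by ring
  have hQℓ : dist (Q ℓ) x ≤ ((d : ℝ) + 4) * ℓ := by
    have h1 : dist (Q ℓ) (Q 0) ≤ ((d : ℝ) + 2) * ℓ := by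
      have h := hQdist ℓ 0
      have hd : dist ℓ (0 : ℝ) = ℓ := by
        rw [Real.dist_eq, sub_zero, abs_of_nonneg hℓ.le]
      rw [hd] at h
      refine h.trans ?_
      exact mul_le_mul_of_nonneg_right hsd hℓ.le
    calc dist (Q ℓ) x ≤ dist (Q ℓ) (Q 0) + dist (Q 0) x := dist_triangle _ _ _
      _ ≤ ((d : ℝ) + 2) * ℓ + 2 * ℓ := add_le_add h1 (by rw [hQ0]; exact hfa)
      _ = ((d : ℝ) + 4) * ℓ := by ring
  set K : NNReal := (3 * ((d : NNReal) + 4)) * (1 / 2 : NNReal) ^ n with hK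
  have hKcoe : (K : ℝ) = 3 * ((d : ℝ) + 4) * ℓ := by
    rw [hK, hℓdef]; push_cast; ring
  set g : ℝ → EuclideanSpace ℝ (Fin d) := fun t =>
    if t ≤ 1 / 3 then x + (3 * t) • (Q 0 - x)
    else if t ≤ 2 / 3 then Q (3 * ℓ * (t - 1 / 3))
    else x + (3 * (1 - t)) • (Q ℓ - x) with hg
  have hg1eq : EqOn g (fun t => x + (3 * t) • (Q 0 - x)) (Icc 0 (1 / 3 : ℝ)) := by
    intro t ht
    simp only [hg, if_pos ht.2]
  have hg2eq : EqOn g (fun t => Q (3 * ℓ * (t - 1 / 3))) (Icc (1 / 3 : ℝ) (2 / 3)) := by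
    intro t ht
    simp only [hg]
    by_cases h13 : t ≤ 1 / 3
    · have ht13 : t = 1 / 3 := le_antisymm h13 ht.1
      subst ht13
      rw [if_pos le_rfl]
      have e1 : 3 * ℓ * ((1 / 3 : ℝ) - 1 / 3) = 0 := by ring
      rw [e1, show (3 : ℝ) * (1 / 3) = 1 by norm_num, one_smul]
      abel
    · rw [if_neg h13, if_pos ht.2]
  have hg3eq : EqOn g (fun t => x + (3 * (1 - t)) • (Q ℓ - x)) (Icc (2 / 3 : ℝ) 1) := by
    intro t ht
    simp only [hg]
    by_cases h23 : t ≤ 2 / 3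
    · have ht23 : t = 2 / 3 := le_antisymm h23 ht.1
      subst ht23
      rw [if_neg (by norm_num : ¬((2 / 3 : ℝ) ≤ 1 / 3)), if_pos le_rfl]
      have e1 : 3 * ℓ * ((2 / 3 : ℝ) - 1 / 3) = ℓ := by ring
      rw [e1, show (3 : ℝ) * (1 - 2 / 3) = 1 by norm_num, one_smul]
      abel
    · have h13 : ¬(t ≤ 1 / 3) := by intro h; exact h23 (by linarith)
      rw [if_neg h13, if_neg h23]
  have hw0 : ‖Q 0 - x‖ ≤ 2 * ℓ := by rw [← dist_eq_norm, hQ0]; exact hfa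
  have hwℓ : ‖Q ℓ - x‖ ≤ ((d : ℝ) + 4) * ℓ := by rw [← dist_eq_norm]; exact hQℓ
  have hdnn : (0 : ℝ) ≤ (d : ℝ) := Nat.cast_nonneg d
  have hlip1 : LipschitzOnWith K (fun t => x + (3 * t) • (Q 0 - x)) (Icc 0 (1 / 3 : ℝ)) := by
    apply LipschitzOnWith.of_dist_le_mul
    intro u _ v _
    have e1 : (x + (3 * u) • (Q 0 - x)) - (x + (3 * v) • (Q 0 - x))
        = (3 * (u - v)) • (Q 0 - x) := by
      rw [add_sub_add_left_eq_sub, ← sub_smul]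
      congr 1
      ring
    rw [dist_eq_norm, e1, norm_smul, Real.norm_eq_abs, Real.dist_eq, hKcoe,
      abs_mul, abs_of_nonneg (by norm_num : (0 : ℝ) ≤ 3)]
    have h5 : 3 * |u - v| * ‖Q 0 - x‖ ≤ 3 * |u - v| * (2 * ℓ) :=
      mul_le_mul_of_nonneg_left hw0 (by positivity)
    nlinarith [h5, mul_nonneg (mul_nonneg hdnn hℓ.le) (abs_nonneg (u - v)),
      mul_nonneg hℓ.le (abs_nonneg (u - v))]
  have hlip2 : LipschitzOnWith K (fun t => Q (3 * ℓ * (t - 1 / 3))) (Icc (1 / 3 : ℝ) (2 / 3)) := by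
    apply LipschitzOnWith.of_dist_le_mul
    intro u _ v _
    refine (hQdist _ _).trans ?_
    have e1 : 3 * ℓ * (u - 1 / 3) - 3 * ℓ * (v - 1 / 3) = 3 * ℓ * (u - v) := by ring
    rw [Real.dist_eq, Real.dist_eq, e1, abs_mul, abs_of_nonneg (by positivity : (0 : ℝ) ≤ 3 * ℓ),
      hKcoe]
    nlinarith [mul_le_mul_of_nonneg_right hsd
      (by positivity : (0 : ℝ) ≤ 3 * ℓ * |u - v|), abs_nonneg (u - v), hℓ,
      mul_nonneg hℓ.le (abs_nonneg (u - v))]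
  have hlip3 : LipschitzOnWith K (fun t => x + (3 * (1 - t)) • (Q ℓ - x)) (Icc (2 / 3 : ℝ) 1) := by
    apply LipschitzOnWith.of_dist_le_mul
    intro u _ v _
    have e1 : (x + (3 * (1 - u)) • (Q ℓ - x)) - (x + (3 * (1 - v)) • (Q ℓ - x))
        = (3 * (v - u)) • (Q ℓ - x) := by
      rw [add_sub_add_left_eq_sub, ← sub_smul]
      congr 1
      ring
    rw [dist_eq_norm, e1, norm_smul, Real.norm_eq_abs, Real.dist_eq, hKcoe,
      abs_mul, abs_of_nonneg (by norm_num : (0 : ℝ) ≤ 3)]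
    have habs : |v - u| = |u - v| := abs_sub_comm v u
    rw [habs]
    have h5 : 3 * |u - v| * ‖Q ℓ - x‖ ≤ 3 * |u - v| * (((d : ℝ) + 4) * ℓ) :=
      mul_le_mul_of_nonneg_left hwℓ (by positivity)
    nlinarith [h5, abs_nonneg (u - v), mul_nonneg hℓ.le (abs_nonneg (u - v)),
      mul_nonneg (mul_nonneg hdnn hℓ.le) (abs_nonneg (u - v))]
  have hglip : LipschitzOnWith K g (Icc 0 1) := by
    have h12 := lipGlue (a := (0:ℝ)) (b := 1/3) (c := 2/3) (by norm_num) (by norm_num)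
      (lipCongr hlip1 hg1eq) (lipCongr hlip2 hg2eq)
    exact lipGlue (a := (0:ℝ)) (b := 2/3) (c := 1) (by norm_num) (by norm_num)
      h12 (lipCongr hlip3 hg3eq)
  have hg0 : g 0 = x := by
    simp only [hg, if_pos (by norm_num : (0:ℝ) ≤ 1/3)]
    rw [mul_zero, zero_smul, add_zero]
  have hg1x : g 1 = x := by
    simp only [hg, if_neg (by norm_num : ¬((1:ℝ) ≤ 1/3)), if_neg (by norm_num : ¬((1:ℝ) ≤ 2/3))]
    rw [show (3 : ℝ) * (1 - 1) = 0 by norm_num, zero_smul, add_zero]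
  refine ⟨g, hglip, hg0, hg1x, ?_⟩
  intro y hy
  obtain ⟨c, hc, rfl⟩ := hcov hy
  have hu := hSsub c hc
  set t := 1 / 3 + ψ c / (3 * ℓ) with htdef
  have ht1 : (1 / 3 : ℝ) ≤ t := by
    have : 0 ≤ ψ c / (3 * ℓ) := div_nonneg hu.1 (by positivity)
    linarith
  have ht2 : t ≤ 2 / 3 := by
    have : ψ c / (3 * ℓ) ≤ 1 / 3 := by
      rw [div_le_iff₀ (by positivity)]
      linarith [hu.2]
    linarith
  refine ⟨t, ⟨le_trans (by norm_num : (0:ℝ) ≤ 1/3) ht1, le_trans ht2 (by norm_num : (2/3:ℝ) ≤ 1)⟩, ?_⟩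
  rw [hg2eq ⟨ht1, ht2⟩]
  show Q (3 * ℓ * (t - 1 / 3)) = f c
  have e1 : 3 * ℓ * (t - 1 / 3) = ψ c := by
    have h3 : (3 : ℝ) * ℓ ≠ 0 := by positivity
    rw [htdef, add_sub_cancel_left, mul_div_cancel₀ _ h3]
  rw [e1, hQf c hc]

/-- Gluing the family of loops into one Lipschitz curve on `[0, 1/2]`. -/
lemma glue_family {E : Type*} [PseudoEMetricSpace E] (x : E) (C : NNReal) (g : ℕ → ℝ → E)
    (hlip : ∀ n, LipschitzOnWith (C * (1 / 2 : NNReal) ^ n) (g n) (Icc 0 1))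
    (h0 : ∀ n, g n 0 = x) (h1 : ∀ n, g n 1 = x) :
    ∃ F : ℝ → E, LipschitzOnWith (2 * C) F (Icc 0 (1 / 2)) ∧
      ∀ n, 1 ≤ n → g n '' Icc 0 1 ⊆ F '' Icc 0 (1 / 2) := by
  classical
  have hex : ∀ t : ℝ, 0 < t → ∃ k : ℕ, (1 / 2 : ℝ) ^ (k + 1) < t := by
    intro t ht
    obtain ⟨k, hk⟩ := exists_pow_lt_of_lt_one ht (by norm_num : (1 / 2 : ℝ) < 1)
    exact ⟨k, lt_of_le_of_lt (pow_le_pow_of_le_one (by norm_num) (by norm_num) (Nat.le_succ k)) hk⟩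
  set F : ℝ → E := fun t =>
    if ht : 0 < t then g (Nat.find (hex t ht)) (2 ^ (Nat.find (hex t ht) + 1) * t - 1) else x
    with hF
  have hpow : ∀ n : ℕ, (2 : ℝ) ^ (n + 1) * (1 / 2) ^ (n + 1) = 1 := by
    intro n
    rw [one_div, inv_pow, mul_inv_cancel₀ (by positivity)]
  have P1 : ∀ n : ℕ, 1 ≤ n →
      EqOn F (fun t => g n (2 ^ (n + 1) * t - 1)) (Icc ((1 / 2 : ℝ) ^ (n + 1)) ((1 / 2) ^ n)) := by
    intro n hn t ht
    have ht0 : 0 < t := lt_of_lt_of_le (by positivity) ht.1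
    rw [hF]
    simp only [dif_pos ht0]
    set m := Nat.find (hex t ht0) with hm
    have hm1 : (1 / 2 : ℝ) ^ (m + 1) < t := Nat.find_spec (hex t ht0)
    rcases eq_or_lt_of_le ht.1 with heq | hlt
    · -- t is the left endpoint; both sides are x
      have hmn : m = n + 1 := by
        refine le_antisymm (Nat.find_le ?_) ?_
        · rw [← heq]
          exact pow_lt_pow_right_of_lt_one₀ (by norm_num) (by norm_num) (by omega)
        · by_contra hcon
          push_neg at hcon
          have hle : m + 1 ≤ n + 1 := by omega
          have : (1 / 2 : ℝ) ^ (n + 1) ≤ (1 / 2) ^ (m + 1) :=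
            pow_le_pow_of_le_one (by norm_num) (by norm_num) hle
          rw [← heq] at hm1
          linarith
      rw [hmn, ← heq]
      have e1 : (2 : ℝ) ^ (n + 1 + 1) * (1 / 2) ^ (n + 1) - 1 = 1 := by
        rw [pow_succ' (2 : ℝ) (n + 1), mul_assoc, hpow n]
        norm_num
      have e2 : (2 : ℝ) ^ (n + 1) * (1 / 2) ^ (n + 1) - 1 = 0 := by
        rw [hpow n]; norm_num
      rw [e1, e2, h1 (n + 1), h0 n]
    · -- interior: m = n
      have hmn : m = n := by
        refine le_antisymm (Nat.find_le hlt) ?_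
        by_contra hcon
        push_neg at hcon
        have hle : m + 1 ≤ n := by omega
        have h2 : (1 / 2 : ℝ) ^ n ≤ (1 / 2) ^ (m + 1) :=
          pow_le_pow_of_le_one (by norm_num) (by norm_num) hle
        have := ht.2
        linarith
      rw [hmn]
  have hmem : ∀ n : ℕ, ∀ t ∈ Icc ((1 / 2 : ℝ) ^ (n + 1)) ((1 / 2) ^ n),
      2 ^ (n + 1) * t - 1 ∈ Icc (0 : ℝ) 1 := by
    intro n t ht
    have h2 : (0 : ℝ) < 2 ^ (n + 1) := by positivity
    constructor
    · have := mul_le_mul_of_nonneg_left ht.1 h2.le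
      rw [hpow n] at this
      linarith
    · have := mul_le_mul_of_nonneg_left ht.2 h2.le
      have hp : (2 : ℝ) ^ (n + 1) * (1 / 2) ^ n = 2 := by
        rw [pow_succ' (2 : ℝ) n, mul_assoc, one_div, inv_pow, mul_inv_cancel₀ (by positivity)]
        norm_num
      rw [hp] at this
      linarith
  have hpiece : ∀ n : ℕ, 1 ≤ n →
      LipschitzOnWith (2 * C) F (Icc ((1 / 2 : ℝ) ^ (n + 1)) ((1 / 2) ^ n)) := by
    intro n hn
    refine lipCongr ?_ (P1 n hn)
    have haff : LipschitzWith ((2 : NNReal) ^ (n + 1)) (fun t : ℝ => 2 ^ (n + 1) * t - 1) := by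
      apply LipschitzWith.of_dist_le_mul
      intro u v
      rw [Real.dist_eq, Real.dist_eq]
      have : 2 ^ (n + 1) * u - 1 - (2 ^ (n + 1) * v - 1) = 2 ^ (n + 1) * (u - v) := by ring
      rw [this, abs_mul, abs_of_nonneg (by positivity : (0:ℝ) ≤ (2:ℝ) ^ (n + 1))]
      push_cast
      exact le_refl _
    have hcomp := (hlip n).comp
      (haff.lipschitzOnWith (s := Icc ((1 / 2 : ℝ) ^ (n + 1)) ((1 / 2) ^ n))) (hmem n)
    have hKeq : C * (1 / 2 : NNReal) ^ n * (2 : NNReal) ^ (n + 1) = 2 * C := by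
      have h2 : ((2 : NNReal) ^ n)⁻¹ * (2 * 2 ^ n) = 2 := by
        rw [mul_comm 2 ((2 : NNReal) ^ n), ← mul_assoc,
          inv_mul_cancel₀ (pow_ne_zero _ two_ne_zero), one_mul]
      rw [one_div, inv_pow, pow_succ' (2 : NNReal) n, mul_assoc, h2, mul_comm]
    rwa [hKeq] at hcomp
  have hhalf : ∀ n : ℕ, 1 ≤ n → (1 / 2 : ℝ) ^ n ≤ 1 / 2 := by
    intro n hn
    calc (1 / 2 : ℝ) ^ n ≤ (1 / 2) ^ 1 := pow_le_pow_of_le_one (by norm_num) (by norm_num) hn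
      _ = 1 / 2 := pow_one _
  have hA : ∀ n : ℕ, 1 ≤ n → LipschitzOnWith (2 * C) F (Icc ((1 / 2 : ℝ) ^ (n + 1)) (1 / 2)) := by
    intro n hn
    induction n with
    | zero => omega
    | succ k ih =>
      by_cases hk : 1 ≤ k
      · have hglue := lipGlue (a := (1 / 2 : ℝ) ^ (k + 2)) (b := (1 / 2) ^ (k + 1))
          (c := 1 / 2)
          (pow_le_pow_of_le_one (by norm_num) (by norm_num) (by omega))
          (hhalf (k + 1) (by omega)) (hpiece (k + 1) (by omega)) (ih hk)
        exact hglue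
      · have hk0 : k = 0 := by omega
        subst hk0
        have := hpiece 1 le_rfl
        simpa using this
  have hF0 : F 0 = x := by rw [hF]; simp
  have hFleft : ∀ m : ℕ, 1 ≤ m → F ((1 / 2 : ℝ) ^ (m + 1)) = x := by
    intro m hm
    have hmem' : (1 / 2 : ℝ) ^ (m + 1) ∈ Icc ((1 / 2 : ℝ) ^ (m + 1)) ((1 / 2) ^ m) :=
      ⟨le_rfl, pow_le_pow_of_le_one (by norm_num) (by norm_num) (Nat.le_succ m)⟩
    rw [P1 m hm hmem']
    show g m (2 ^ (m + 1) * (1 / 2) ^ (m + 1) - 1) = x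
    have he : (2 : ℝ) ^ (m + 1) * (1 / 2) ^ (m + 1) - 1 = 0 := by rw [hpow m]; norm_num
    rw [he, h0 m]
  have key : ∀ s ∈ Icc (0:ℝ) (1 / 2), ∀ t ∈ Icc (0:ℝ) (1 / 2), s ≤ t →
      edist (F s) (F t) ≤ (2 * C : NNReal) * edist s t := by
    intro s hs t ht hst
    by_cases hs0 : 0 < s
    · have hks := hex s hs0
      set k := Nat.find hks with hk
      have hspec : (1 / 2 : ℝ) ^ (k + 1) < s := Nat.find_spec hks
      have hk1 : 1 ≤ k := by
        rcases Nat.eq_zero_or_pos k with h | h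
        · exfalso
          rw [h] at hspec
          norm_num at hspec
          linarith [hs.2]
        · exact h
      exact hA k hk1 ⟨hspec.le, hs.2⟩ ⟨hspec.le.trans hst, ht.2⟩
    · have hs' : s = 0 := le_antisymm (not_lt.1 hs0) hs.1
      subst hs'
      by_cases ht0 : 0 < t
      · have hkt := hex t ht0
        set m := Nat.find hkt with hm
        have hspec : (1 / 2 : ℝ) ^ (m + 1) < t := Nat.find_spec hkt
        have hm1 : 1 ≤ m := by
          rcases Nat.eq_zero_or_pos m with h | h
          · exfalso
            rw [h] at hspec
            norm_num at hspec
            linarith [ht.2]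
          · exact h
        set c := (1 / 2 : ℝ) ^ (m + 1) with hc
        have hc0 : 0 < c := by positivity
        calc edist (F 0) (F t) = edist (F c) (F t) := by rw [hF0, hFleft m hm1]
          _ ≤ (2 * C : NNReal) * edist c t :=
              hA m hm1 ⟨le_rfl, (hhalf (m + 1) (by omega))⟩ ⟨hspec.le, ht.2⟩
          _ ≤ (2 * C : NNReal) * edist 0 t := by
              apply mul_le_mul_right
              rw [edist_dist, edist_dist, Real.dist_eq, Real.dist_eq]
              apply ENNReal.ofReal_le_ofReal
              rw [abs_of_nonpos (by linarith), abs_of_nonpos (by linarith)]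
              linarith
      · have ht' : t = 0 := le_antisymm (not_lt.1 ht0) ht.1
        subst ht'
        simp
  refine ⟨F, ?_, ?_⟩
  · intro u hu v hv
    rcases le_total u v with h | h
    · exact key u hu v hv h
    · rw [edist_comm (F u), edist_comm u]; exact key v hv u hu h
  · intro n hn y hy
    obtain ⟨u, hu, rfl⟩ := hy
    have hppos : (0:ℝ) < (1 / 2) ^ (n + 1) := by positivity
    have hub : (u + 1) * (1 / 2 : ℝ) ^ (n + 1) ≤ (1 / 2) ^ n := by
      have h2 : (u + 1) * (1 / 2 : ℝ) ^ (n + 1) ≤ 2 * (1 / 2) ^ (n + 1) := by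
        nlinarith [hu.2]
      have h3 : 2 * (1 / 2 : ℝ) ^ (n + 1) = (1 / 2) ^ n := by
        rw [pow_succ]; ring
      linarith
    have hlb : (1 / 2 : ℝ) ^ (n + 1) ≤ (u + 1) * (1 / 2) ^ (n + 1) := by
      nlinarith [hu.1]
    refine ⟨(u + 1) * (1 / 2) ^ (n + 1), ⟨by nlinarith [hu.1], hub.trans (hhalf n hn)⟩, ?_⟩
    rw [P1 n hn ⟨hlb, hub⟩]
    show g n (2 ^ (n + 1) * ((u + 1) * (1 / 2) ^ (n + 1)) - 1) = g n u
    have he : (2 : ℝ) ^ (n + 1) * ((u + 1) * (1 / 2) ^ (n + 1)) - 1 = u := by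
      nlinarith [hpow n]
    rw [he]

/-- Let `x ∈ ℝ^d` and for each `n ≥ 1` let `A n` be contained in the closed ball of
radius `2^{-n}` centered at `x`, with `A n` covered by a rectifiable curve of length at
most `2^{-n}` (a continuous map on a compact interval whose total variation, i.e. length,
is at most `2^{-n}`). Then a single rectifiable curve covers `⋃_{n ≥ 1} A n`. -/
theorem union_covered_by_rectifiable_curve
    {d : ℕ} (x : EuclideanSpace ℝ (Fin d)) (A : ℕ → Set (EuclideanSpace ℝ (Fin d)))
    (hball : ∀ n : ℕ, 1 ≤ n → A n ⊆ Metric.closedBall x ((1 / 2 : ℝ) ^ n))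
    (hcurve : ∀ n : ℕ, 1 ≤ n →
      ∃ (a b : ℝ) (f : ℝ → EuclideanSpace ℝ (Fin d)), a ≤ b ∧
        ContinuousOn f (Set.Icc a b) ∧
        eVariationOn f (Set.Icc a b) ≤ ENNReal.ofReal ((1 / 2 : ℝ) ^ n) ∧
        A n ⊆ f '' Set.Icc a b) :
    ∃ (a b : ℝ) (f : ℝ → EuclideanSpace ℝ (Fin d)), a ≤ b ∧
      ContinuousOn f (Set.Icc a b) ∧
      eVariationOn f (Set.Icc a b) < ⊤ ∧
      (⋃ n ∈ Set.Ici 1, A n) ⊆ f '' Set.Icc a b := by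
  classical
  set C : NNReal := 3 * ((d : NNReal) + 4) with hC
  have hex_g : ∀ n : ℕ, ∃ g : ℝ → EuclideanSpace ℝ (Fin d),
      LipschitzOnWith (C * (1 / 2 : NNReal) ^ n) g (Icc 0 1) ∧
      g 0 = x ∧ g 1 = x ∧ (1 ≤ n → A n ⊆ g '' Icc 0 1) := by
    intro n
    by_cases hn : 1 ≤ n
    · obtain ⟨g, hg1, hg2, hg3, hg4⟩ := pieceLemma x (A n) n (hball n hn) (hcurve n hn)
      exact ⟨g, hg1, hg2, hg3, fun _ => hg4⟩
    · refine ⟨fun _ => x, ?_, rfl, rfl, fun h => absurd h hn⟩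
      intro u _ v _; simp
  choose g hlip h0 h1 hcov using hex_g
  obtain ⟨F, hFlip, hFcov⟩ := glue_family x C g hlip h0 h1
  refine ⟨0, 1 / 2, F, by norm_num, hFlip.continuousOn, ?_, ?_⟩
  · have hid : MonotoneOn (id : ℝ → ℝ) (Icc 0 (1 / 2)) := fun u _ v _ h => h
    have hvar : eVariationOn (id : ℝ → ℝ) (Icc (0:ℝ) (1 / 2)) ≤ ENNReal.ofReal (1 / 2) := by
      have := hid.eVariationOn_le (a := 0) (b := 1 / 2)
        (by constructor <;> norm_num) (by constructor <;> norm_num)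
      simpa using this
    have hcomp := hFlip.comp_eVariationOn_le (g := (id : ℝ → ℝ)) (s := Icc (0:ℝ) (1 / 2))
      (mapsTo_id _)
    rw [Function.comp_id] at hcomp
    refine lt_of_le_of_lt hcomp ?_
    exact ENNReal.mul_lt_top ENNReal.coe_lt_top
      (lt_of_le_of_lt hvar ENNReal.ofReal_lt_top)
  · intro y hy
    simp only [mem_iUnion, Set.mem_Ici, exists_prop] at hy
    obtain ⟨n, hn, hyn⟩ := hy
    exact hFcov n hn (hcov n hn hyn)
end
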